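/- Let D be a Dyck path of size n ≥ 2 with area sequence (a_1, …, a_n), let p be defined by: p + 1 = min{j ≥ 2 : a_j = 0} if some a_j = 0 with j ≥ 2, and p = n otherwise, and let D' be the cyclic rotation of D, i.e., the Dyck path of size n − 1 with area sequence (a_{p+1}, …, a_n, a_2 − 1, …, a_p − 1). Then dinv(D') = dinv(D) − (#{j : 1 ≤ j ≤ n, a_j = 0} − 1). -/

import Mathlib

open Finset

namespace DeltaCat

/-- `i`-th entry (0-indexed) of an area sequence, defaulting to `0`. -/
def ent (l : List ℕ) (i : ℕ) : ℕ := l.getD i 0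

/-- `l` is the area sequence of a Dyck path (of size `l.length ≥ 1`): it is nonempty,
starts with `0`, and consecutive entries increase by at most one. -/
def IsDyck (l : List ℕ) : Prop :=
  l ≠ [] ∧ ent l 0 = 0 ∧ ∀ i < l.length, i + 1 < l.length → ent l (i + 1) ≤ ent l i + 1

instance (l : List ℕ) : Decidable (IsDyck l) := by unfold IsDyck; infer_instance

/-- the area of a Dyck path -/
def area (l : List ℕ) : ℕ := l.sum

/-- the diagonal inversions of a Dyck path: pairs `(i,j)`, `i < j`, with
`a_i = a_j` or `a_i = a_j + 1` (0-indexed rows). -/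
def dinvPairs (l : List ℕ) : Finset (ℕ × ℕ) :=
  (Finset.range l.length ×ˢ Finset.range l.length).filter
    (fun p => p.1 < p.2 ∧ (ent l p.1 = ent l p.2 ∨ ent l p.1 = ent l p.2 + 1))

/-- the number of diagonal inversions -/
def dinv (l : List ℕ) : ℕ := (dinvPairs l).card

/-- `b'(k) = #{j > k : a_j = a_k} + #{j < k : a_j = a_k + 1}` (0-indexed rows). -/
def bval (l : List ℕ) (k : ℕ) : ℕ :=
  ((Finset.range l.length).filter (fun j => k < j ∧ ent l j = ent l k)).card +
  ((Finset.range l.length).filter (fun j => j < k ∧ ent l j = ent l k + 1)).card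

/-- row `i` (0-indexed) is a double rise -/
def IsRise (l : List ℕ) (i : ℕ) : Prop := i + 1 < l.length ∧ ent l (i + 1) = ent l i + 1

instance (l : List ℕ) (i : ℕ) : Decidable (IsRise l i) := by unfold IsRise; infer_instance

/-- row `i` (0-indexed) is a peak -/
def IsPeak (l : List ℕ) (i : ℕ) : Prop := i < l.length ∧ ¬ IsRise l i

instance (l : List ℕ) (i : ℕ) : Decidable (IsPeak l i) := by unfold IsPeak; infer_instance

/-- `Rise_∘(D,S)`: the decorated rows which are double rises -/
def riseSet (l : List ℕ) (S : Finset ℕ) : Finset ℕ := S.filter (fun i => IsRise l i)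

/-- `Peak_∘(D,S)`: the decorated rows which are peaks -/
def peakSet (l : List ℕ) (S : Finset ℕ) : Finset ℕ := S.filter (fun i => IsPeak l i)

/-- `area_∘(D,S)` -/
def areaC (l : List ℕ) (S : Finset ℕ) : ℕ := area l - ∑ i ∈ riseSet l S, ent l (i + 1)

/-- `dinv_∘(D,S)` -/
def dinvC (l : List ℕ) (S : Finset ℕ) : ℕ := dinv l - ∑ i ∈ peakSet l S, bval l i

/-- the largest row index (0-indexed) attaining the maximal area value -/
def lastMaxRow (l : List ℕ) : ℕ :=
  ((Finset.range l.length).filter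
    (fun i => ∀ j ∈ Finset.range l.length, ent l j ≤ ent l i)).sup id

/-- `S` is a valid set of ∘-decorations on the rows of `l` : a set of rows not containing
the largest index attaining the maximal area value. -/
def ValidDec (l : List ℕ) (S : Finset ℕ) : Prop :=
  (∀ i ∈ S, i < l.length) ∧ lastMaxRow l ∉ S

instance (l : List ℕ) (S : Finset ℕ) : Decidable (ValidDec l S) := by
  unfold ValidDec; infer_instance

/-- the (0-indexed) rows where the path touches the diagonal, i.e. the starts of segments -/
def segStarts (l : List ℕ) : List ℕ :=
  (List.range l.length).filter (fun i => ent l i == 0)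

/-- the touch composition of a Dyck path: the list of lengths of the maximal segments -/
def touchComp (l : List ℕ) : List ℕ :=
  List.zipWith (fun cur next => next - cur) (segStarts l) ((segStarts l).drop 1 ++ [l.length])

/-- the rise-touch composition `α^Rise(D,S)`: the touch composition with the number of
decorated double rises in each segment subtracted from the corresponding part. -/
def riseTouch (l : List ℕ) (S : Finset ℕ) : List ℕ :=
  List.zipWith
    (fun cur next => (next - cur) - ((riseSet l S).filter (fun i => cur ≤ i ∧ i < next)).card)
    (segStarts l) ((segStarts l).drop 1 ++ [l.length])

/-- all lists of length `n` with entries at most `n`; this contains every Dyck path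
area sequence of size `n`. -/
def allSeqs (n : ℕ) : Finset (List ℕ) :=
  (Finset.univ : Finset (Fin n → Fin (n + 1))).image fun v => (List.ofFn v).map Fin.val

/-- the Finset of all Dyck paths of size `n` (encoded by their area sequences) -/
def dyckPaths (n : ℕ) : Finset (List ℕ) := (allSeqs n).filter IsDyck

/-- the Finset of all ∘-decorated Dyck paths of size `n` -/
def decPaths (n : ℕ) : Finset (List ℕ × Finset ℕ) :=
  ((allSeqs n) ×ˢ (Finset.range n).powerset).filter fun p => IsDyck p.1 ∧ ValidDec p.1 p.2

/-- `Cat^Rise_{α,k,ℓ}(q,t)`, the generating function of ∘-decorated Dyck paths of size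
`|α| + ℓ` with `k` decorated peaks, `ℓ` decorated double rises and rise-touch composition
`α`, by the statistics `dinv_∘` and `area_∘`; it is `0` when `k < 0` or `ℓ < 0`. -/
def CatRise {R : Type*} [CommRing R] (q t : R) (α : List ℕ) (k ℓ : ℤ) : R :=
  if 0 ≤ k ∧ 0 ≤ ℓ then
    ∑ p ∈ (decPaths (α.sum + ℓ.toNat)).filter
        (fun p => (peakSet p.1 p.2).card = k.toNat ∧ (riseSet p.1 p.2).card = ℓ.toNat ∧
          riseTouch p.1 p.2 = α),
      q ^ dinvC p.1 p.2 * t ^ areaC p.1 p.2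
  else 0

end DeltaCat


namespace DeltaCat

/-- the 0-indexed position of the first return of the path to the diagonal
(`l.length` if the path never returns to the diagonal after the start). -/
def firstReturn (l : List ℕ) : ℕ :=
  if h : ((Finset.range l.length).filter (fun j => 1 ≤ j ∧ ent l j = 0)).Nonempty
  then ((Finset.range l.length).filter (fun j => 1 ≤ j ∧ ent l j = 0)).min' h
  else l.length

/-- the cyclic rotation of a Dyck path: the first segment is moved to the end,
with its first vertical step deleted. -/
def rotateD (l : List ℕ) : List ℕ :=
  l.drop (firstReturn l) ++ ((l.take (firstReturn l)).drop 1).map (fun x => x - 1)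

end DeltaCat

open DeltaCat

namespace DeltaCat
theorem entB (l : List ℕ) (p : ℕ) (x : ℕ) (hx : x < l.length - p) :
    ent (l.drop p ++ ((l.take p).drop 1).map (fun x => x - 1)) x = ent l (x + p) := by
  unfold ent
  rw [List.getD_append _ _ _ _ (by simp; omega)]
  rw [List.getD_eq_getElem?_getD, List.getElem?_drop, Nat.add_comm p x,
    List.getD_eq_getElem?_getD]
theorem entA (l : List ℕ) (p x : ℕ) (hp : p ≤ l.length) (hm : l.length - p ≤ x) (hx : x < l.length - 1)
  (hpos : ent l (x - (l.length - p) + 1) ≠ 0) :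
    ent (l.drop p ++ ((l.take p).drop 1).map (fun x => x - 1)) x + 1
      = ent l (x - (l.length - p) + 1) := by
  unfold ent at hpos ⊢
  rw [List.getD_append_right _ _ _ _ (by simp; omega)]
  have h1 : (List.map (fun x => x - 1) ((l.take p).drop 1)).getD (x - (l.drop p).length) 0
      = ((l.take p).drop 1).getD (x - (l.drop p).length) 0 - 1 := by
    have := List.getD_map ((l.take p).drop 1) 0 (n := x - (l.drop p).length) (fun x => x - 1)
    simpa using this
  rw [h1]
  rw [List.getD_eq_getElem?_getD, List.getElem?_drop, List.getElem?_take]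
  simp only [List.length_drop]
  rw [if_pos (by omega)]
  rw [show x - (l.length - p) + 1 = 1 + (x - (l.length - p)) by omega] at hpos ⊢
  rw [List.getD_eq_getElem?_getD] at hpos ⊢
  omega
end DeltaCat

/-- The cyclic rotation of a Dyck path of size `n ≥ 2` satisfies
`dinv(D') = dinv(D) - (#{j : a_j = 0} - 1)`. -/
theorem rotateD_dinv (l : List ℕ) (hl : IsDyck l) (h2 : 2 ≤ l.length) :
    dinv (rotateD l)
        + (((Finset.range l.length).filter (fun j => ent l j = 0)).card - 1)
      = dinv l := by

  obtain ⟨hne, h0, hstep⟩ := hl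
  have hp1 : 1 ≤ firstReturn l := by
    unfold firstReturn
    split_ifs with h
    · have := Finset.min'_mem _ h
      simp only [Finset.mem_filter, Finset.mem_range] at this
      omega
    · omega
  have hpn : firstReturn l ≤ l.length := by
    unfold firstReturn
    split_ifs with h
    · have := Finset.min'_mem _ h
      simp only [Finset.mem_filter, Finset.mem_range] at this
      omega
    · exact le_rfl
  have hApos : ∀ j, 1 ≤ j → j < firstReturn l → ent l j ≠ 0 := by
    intro j hj1 hjp he
    have hjn : j < l.length := lt_of_lt_of_le hjp hpn
    have hmem : j ∈ (Finset.range l.length).filter (fun j => 1 ≤ j ∧ ent l j = 0) :=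
      Finset.mem_filter.2 ⟨Finset.mem_range.2 hjn, hj1, he⟩
    rw [firstReturn] at hjp
    split_ifs at hjp with h
    · exact absurd (Finset.min'_le _ _ hmem) (by omega)
    · exact h ⟨j, hmem⟩
  set n := l.length with hn
  set p := firstReturn l with hpd
  set m := n - p with hmd
  have hrot : rotateD l = l.drop p ++ ((l.take p).drop 1).map (fun x => x - 1) := by
    rw [rotateD, ← hpd]
  have hlen' : (rotateD l).length = n - 1 := by
    rw [hrot]
    simp only [List.length_append, List.length_drop, List.length_map, List.length_take]
    omega
  have hB : ∀ x, x < m → ent (rotateD l) x = ent l (x + p) := by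
    intro x hx
    rw [hrot]
    exact entB l p x (by omega)
  have hA : ∀ x, m ≤ x → x < n - 1 → ent (rotateD l) x + 1 = ent l (x - m + 1) := by
    intro x h1 h2'
    have hpos : ent l (x - m + 1) ≠ 0 := hApos _ (by omega) (by omega)
    rw [hrot]
    have := entA l p x (by omega) (by rw [← hn, ← hmd]; omega) (by rw [← hn]; omega)
      (by rw [← hn, ← hmd]; exact hpos)
    rw [← hn, ← hmd] at this
    exact this
  have hmemD : ∀ (L : List ℕ) (q : ℕ × ℕ), q ∈ dinvPairs L ↔
      q.1 < L.length ∧ q.2 < L.length ∧ q.1 < q.2 ∧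
        (ent L q.1 = ent L q.2 ∨ ent L q.1 = ent L q.2 + 1) := by
    intro L q
    simp only [dinvPairs, Finset.mem_filter, Finset.mem_product, Finset.mem_range]
    tauto
  -- Step B : zeros count
  have hZ : ((Finset.range n).filter (fun j => ent l j = 0)).card
      = ((Finset.range n).filter (fun j => 0 < j ∧ ent l j = 0)).card + 1 := by
    have hins : (Finset.range n).filter (fun j => ent l j = 0)
        = insert 0 ((Finset.range n).filter (fun j => 0 < j ∧ ent l j = 0)) := by
      ext j
      simp only [Finset.mem_filter, Finset.mem_insert, Finset.mem_range]
      constructor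
      · rintro ⟨hj, he⟩
        rcases Nat.eq_zero_or_pos j with h | h
        · exact Or.inl h
        · exact Or.inr ⟨hj, h, he⟩
      · rintro (rfl | ⟨hj, h, he⟩)
        · exact ⟨by omega, h0⟩
        · exact ⟨hj, he⟩
    rw [hins, Finset.card_insert_of_notMem (by simp)]
  -- Step A : pairs with first coordinate 0
  have hcard0 : ((dinvPairs l).filter (fun q => q.1 = 0)).card
      = ((Finset.range n).filter (fun j => 0 < j ∧ ent l j = 0)).card := by
    refine Finset.card_nbij' (fun q => q.2) (fun j => (0, j)) ?_ ?_ ?_ ?_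
    · intro q hq
      simp only [Finset.mem_coe, Finset.mem_filter] at hq
      obtain ⟨hq1, hq2⟩ := hq
      rw [hmemD] at hq1
      rw [hq2] at hq1
      rw [h0] at hq1
      simp only [Finset.mem_coe, Finset.mem_filter, Finset.mem_range]
      refine ⟨by omega, by omega, by omega⟩
    · intro j hj
      simp only [Finset.mem_coe, Finset.mem_filter, Finset.mem_range] at hj
      rw [Finset.mem_coe, Finset.mem_filter]
      refine ⟨?_, rfl⟩
      rw [hmemD]
      dsimp only
      refine ⟨by omega, by omega, by omega, Or.inl ?_⟩
      simp only [h0]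
      omega
    · intro q hq
      simp only [Finset.mem_coe, Finset.mem_filter] at hq
      obtain ⟨a, b⟩ := q
      simp only at hq ⊢
      rw [hq.2]
    · intro j hj
      rfl
  -- Step C : the rotation bijection
  have hcard1 : (dinvPairs (rotateD l)).card
      = ((dinvPairs l).filter (fun q => ¬ q.1 = 0)).card := by
    refine Finset.card_nbij'
      (fun q => if q.2 < m then (q.1 + p, q.2 + p)
        else if q.1 < m then (q.2 - m + 1, q.1 + p) else (q.1 - m + 1, q.2 - m + 1))
      (fun q => if p ≤ q.1 then (q.1 - p, q.2 - p)
        else if p ≤ q.2 then (q.2 - p, q.1 + m - 1) else (q.1 + m - 1, q.2 + m - 1))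
      ?_ ?_ ?_ ?_
    · rintro ⟨a, b⟩ hq
      rw [Finset.mem_coe, hmemD, hlen'] at hq
      obtain ⟨hx1, hx2, hlt, hcond⟩ := hq
      simp only at hx1 hx2 hlt hcond ⊢
      by_cases c2 : b < m
      · have c1 : a < m := by omega
        rw [if_pos c2]
        rw [hB a c1, hB b c2] at hcond
        simp only [Finset.mem_coe, Finset.mem_filter]
        refine ⟨?_, by simp; omega⟩
        rw [hmemD]
        dsimp only
        exact ⟨by omega, by omega, by omega, hcond⟩
      · by_cases c1 : a < m
        · rw [if_neg c2, if_pos c1]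
          rw [hB a c1] at hcond
          have hA2 := hA b (by omega) hx2
          simp only [Finset.mem_coe, Finset.mem_filter]
          refine ⟨?_, by simp⟩
          rw [hmemD]
          dsimp only
          refine ⟨by omega, by omega, by omega, ?_⟩
          rcases hcond with h | h
          · exact Or.inr (by omega)
          · exact Or.inl (by omega)
        · rw [if_neg c2, if_neg c1]
          have hA1 := hA a (by omega) hx1
          have hA2 := hA b (by omega) hx2
          simp only [Finset.mem_coe, Finset.mem_filter]
          refine ⟨?_, by simp⟩
          rw [hmemD]
          dsimp only
          refine ⟨by omega, by omega, by omega, ?_⟩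
          rcases hcond with h | h
          · exact Or.inl (by omega)
          · exact Or.inr (by omega)
    · rintro ⟨a, b⟩ hq
      simp only [Finset.mem_coe, Finset.mem_filter] at hq
      obtain ⟨hq1, hq2⟩ := hq
      rw [hmemD] at hq1
      obtain ⟨hx1, hx2, hlt, hcond⟩ := hq1
      simp only at hx1 hx2 hlt hcond hq2 ⊢
      have ha1 : 1 ≤ a := by omega
      by_cases c1 : p ≤ a
      · rw [if_pos c1]
        have e1 := hB (a - p) (by omega)
        rw [show a - p + p = a by omega] at e1
        have e2 := hB (b - p) (by omega)
        rw [show b - p + p = b by omega] at e2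
        rw [Finset.mem_coe, hmemD, hlen']
        dsimp only
        refine ⟨by omega, by omega, by omega, ?_⟩
        rw [e1, e2]
        exact hcond
      · by_cases c2 : p ≤ b
        · rw [if_neg c1, if_pos c2]
          have e1 := hB (b - p) (by omega)
          rw [show b - p + p = b by omega] at e1
          have e2 := hA (a + m - 1) (by omega) (by omega)
          rw [show a + m - 1 - m + 1 = a by omega] at e2
          rw [Finset.mem_coe, hmemD, hlen']
          dsimp only
          refine ⟨by omega, by omega, by omega, ?_⟩
          rcases hcond with h | h
          · exact Or.inr (by omega)
          · exact Or.inl (by omega)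
        · rw [if_neg c1, if_neg c2]
          have e1 := hA (a + m - 1) (by omega) (by omega)
          rw [show a + m - 1 - m + 1 = a by omega] at e1
          have e2 := hA (b + m - 1) (by omega) (by omega)
          rw [show b + m - 1 - m + 1 = b by omega] at e2
          rw [Finset.mem_coe, hmemD, hlen']
          dsimp only
          refine ⟨by omega, by omega, by omega, ?_⟩
          rcases hcond with h | h
          · exact Or.inl (by omega)
          · exact Or.inr (by omega)
    · rintro ⟨a, b⟩ hq
      rw [Finset.mem_coe, hmemD, hlen'] at hq
      obtain ⟨hx1, hx2, hlt, -⟩ := hq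
      simp only at hx1 hx2 hlt ⊢
      split_ifs <;> simp only [Prod.mk.injEq] <;> constructor <;> omega
    · rintro ⟨a, b⟩ hq
      simp only [Finset.mem_coe, Finset.mem_filter] at hq
      obtain ⟨hq1, hq2⟩ := hq
      rw [hmemD] at hq1
      obtain ⟨hx1, hx2, hlt, -⟩ := hq1
      simp only at hx1 hx2 hlt hq2 ⊢
      split_ifs <;> simp only [Prod.mk.injEq] <;> constructor <;> omega
  have hsplit := Finset.card_filter_add_card_filter_not
    (s := dinvPairs l) (p := fun q => q.1 = 0)
  unfold dinv
  omega
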